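/- Let R be a finite commutative ring admitting a generating character χ, let N be a positive integer, let C be an R-submodule of R^N, and let f : R^N → ℂ be any function. Define the Hadamard transform f̃(u) = ∑_{v ∈ R^N} χ(⟨u,v⟩) f(v) for u ∈ R^N. Then ∑_{v ∈ C^⊥} f(v) = (1/|C|) ∑_{u ∈ C} f̃(u). -/

import Mathlib

open scoped Classical

/-- Hadamard transform / Poisson summation for a linear code `C ⊆ R^N` over a finite
commutative ring `R` with a generating character `χ`: for any `f : R^N → ℂ`,
`∑_{v ∈ C^⊥} f(v) = (1/|C|) ∑_{u ∈ C} f̃(u)` where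
`f̃(u) = ∑_{v ∈ R^N} χ(⟨u,v⟩) f(v)`. -/
theorem sum_over_dual_code_eq_sum_hadamard_transform
    {R : Type*} [CommRing R] [Fintype R]
    (χ : AddChar R ℂ)
    (hχ : ∀ J : Ideal R, (∀ a ∈ J, χ a = 1) → J = ⊥)
    (N : ℕ) (hN : 0 < N)
    (C : Submodule R (Fin N → R))
    (f : (Fin N → R) → ℂ) :
    ∑ v ∈ Finset.univ.filter (fun v : Fin N → R => ∀ u ∈ C, ∑ j, u j * v j = 0), f v
      = (Fintype.card C : ℂ)⁻¹ *
          ∑ u : C, ∑ v : Fin N → R, χ (∑ j, (u : Fin N → R) j * v j) * f v := by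
  have key : ∀ v : Fin N → R,
      (∑ u : C, χ (∑ j, (u : Fin N → R) j * v j))
        = if (∀ u ∈ C, ∑ j, u j * v j = 0) then (Fintype.card C : ℂ) else 0 := by
    intro v
    set φ : C →+ R :=
      { toFun := fun u => ∑ j, (u : Fin N → R) j * v j
        map_zero' := by simp
        map_add' := by
          intro a b
          simp [add_mul, Finset.sum_add_distrib] }
    set ψ : AddChar C ℂ := χ.compAddMonoidHom φ with hψdef
    have hvals : ∀ u : C, χ (∑ j, (u : Fin N → R) j * v j) = ψ u := fun u => rfl
    by_cases h : ∀ u ∈ C, ∑ j, u j * v j = 0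
    · rw [if_pos h]
      simp_rw [hvals]
      exact AddChar.sum_eq_card_of_eq_one (by
        ext u
        simp only [hψdef, AddChar.compAddMonoidHom_apply, AddChar.one_apply]
        rw [show φ u = 0 from h u u.2, AddChar.map_zero_eq_one])
    · rw [if_neg h]
      simp_rw [hvals]
      apply AddChar.sum_eq_zero_of_ne_one
      intro hone
      apply h
      intro u hu
      have hspan : Ideal.span {∑ j, u j * v j} = ⊥ := by
        apply hχ
        intro a ha
        rw [Ideal.mem_span_singleton] at ha
        obtain ⟨r, rfl⟩ := ha
        have : (∑ j, u j * v j) * r = φ (r • (⟨u, hu⟩ : C)) := by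
          show _ = ∑ j, ((r • (⟨u, hu⟩ : C)) : Fin N → R) j * v j
          rw [Finset.sum_mul]
          refine Finset.sum_congr rfl fun j _ => ?_
          simp [smul_eq_mul]; ring
        rw [this, show χ (φ (r • (⟨u, hu⟩ : C))) = ψ (r • ⟨u, hu⟩) from rfl, hone]
        rfl
      have := Ideal.span_singleton_eq_bot.mp hspan
      exact this
  calc ∑ v ∈ Finset.univ.filter (fun v : Fin N → R => ∀ u ∈ C, ∑ j, u j * v j = 0), f v
      = ∑ v : Fin N → R,
          (if (∀ u ∈ C, ∑ j, u j * v j = 0) then (1 : ℂ) else 0) * f v := by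
        rw [Finset.sum_filter]
        congr 1; ext v
        split <;> simp
    _ = (Fintype.card C : ℂ)⁻¹ * ∑ v : Fin N → R,
          (∑ u : C, χ (∑ j, (u : Fin N → R) j * v j)) * f v := by
        rw [Finset.mul_sum]
        congr 1; ext v
        rw [key v]
        have hc : (Fintype.card C : ℂ) ≠ 0 := by
          exact_mod_cast Fintype.card_ne_zero
        split <;> field_simp <;> simp
    _ = (Fintype.card C : ℂ)⁻¹ *
          ∑ u : C, ∑ v : Fin N → R, χ (∑ j, (u : Fin N → R) j * v j) * f v := by
        congr 1
        rw [Finset.sum_comm]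
        simp_rw [Finset.sum_mul]
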